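/- For α ≥ 0, m ∈ ℕ, the function φ_m^{(α)}(x) = e^{-x²/2} L_m^{(α)}(x²) is an eigenfunction of the Hankel transform of order α with eigenvalue (-1)^m: H_α(φ_m^{(α)})(y) = (-1)^m φ_m^{(α)}(y) for all y ≥ 0. -/

import Mathlib

open MeasureTheory

/-- The generalized Laguerre polynomial of degree `m` and order `α`. -/
noncomputable def laguerre (α : ℝ) (m : ℕ) (x : ℝ) : ℝ :=
  ∑ k ∈ Finset.range (m + 1),
    (-1 : ℝ) ^ k * Real.Gamma ((m : ℝ) + α + 1) /
      (Real.Gamma ((k : ℝ) + α + 1) * (Nat.factorial (m - k)) * (Nat.factorial k)) * x ^ k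

/-- The Laguerre function `φ_m^{(α)}(x) = e^{-x²/2} L_m^{(α)}(x²)`. -/
noncomputable def laguerreFun (α : ℝ) (m : ℕ) (x : ℝ) : ℝ :=
  Real.exp (-x ^ 2 / 2) * laguerre α m (x ^ 2)

/-- The normalized Bessel function `j_α(w) = J_α(w)/w^α` on the reals. -/
noncomputable def besselNormR (α w : ℝ) : ℝ :=
  ∑' k : ℕ, (-1 : ℝ) ^ k * (2 : ℝ) ^ (-(α + 2 * (k : ℝ))) /
      (Real.Gamma ((k : ℝ) + 1) * Real.Gamma ((k : ℝ) + α + 1)) * w ^ (2 * k)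

namespace HankelAux

open Finset Set

/-! ### Pochhammer-type products -/

noncomputable def pk (t : ℝ) (n : ℕ) : ℝ := ∏ i ∈ Finset.range n, (t + i)

noncomputable def dk (s : ℝ) (n : ℕ) : ℝ := ∏ i ∈ Finset.range n, (s - i)

lemma pk_zero (t : ℝ) : pk t 0 = 1 := by simp [pk]

lemma pk_congr {a b : ℝ} (n : ℕ) (h : a = b) : pk a n = pk b n := by rw [h]

lemma pk_succ (t : ℝ) (n : ℕ) : pk t (n + 1) = pk t n * (t + n) := by
  simp [pk, Finset.prod_range_succ]

lemma pk_succ' (t : ℝ) (n : ℕ) : pk t (n + 1) = t * pk (t + 1) n := by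
  rw [pk, Finset.prod_range_succ', pk]
  simp only [Nat.cast_zero, add_zero]
  rw [mul_comm]
  congr 1
  exact Finset.prod_congr rfl fun i _ => by push_cast; ring

lemma dk_succ' (s : ℝ) (n : ℕ) : dk s (n + 1) = s * dk (s - 1) n := by
  rw [dk, Finset.prod_range_succ', dk]
  simp only [Nat.cast_zero, sub_zero]
  rw [mul_comm]
  congr 1
  exact Finset.prod_congr rfl fun i _ => by push_cast; ring

lemma pk_pos {t : ℝ} (ht : 0 < t) (n : ℕ) : 0 < pk t n := by
  refine Finset.prod_pos fun i _ => ?_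
  positivity

lemma Gamma_pk {t : ℝ} (ht : 0 < t) (n : ℕ) :
    Real.Gamma (t + n) = Real.Gamma t * pk t n := by
  induction n with
  | zero => simp [pk]
  | succ n ih =>
      have h1 : t + ((n + 1 : ℕ) : ℝ) = (t + n) + 1 := by push_cast; ring
      have h2 : t + (n : ℝ) ≠ 0 := by positivity
      rw [h1, Real.Gamma_add_one h2, ih, pk_succ]
      ring

lemma dk_cast_eq_zero {k n : ℕ} (h : k < n) : dk (k : ℝ) n = 0 := by
  refine Finset.prod_eq_zero (Finset.mem_range.mpr h) ?_
  simp

lemma dk_cast_shift (n : ℕ) : ∀ j : ℕ, dk (((j + n : ℕ) : ℝ)) n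
    = (Nat.factorial (j + n) : ℝ) / (Nat.factorial j : ℝ) := by
  induction n with
  | zero =>
      intro j
      rw [dk]
      simp only [Finset.range_zero, Finset.prod_empty, Nat.add_zero]
      rw [div_self]
      exact_mod_cast Nat.factorial_ne_zero j
  | succ n ih =>
      intro j
      have h1 : ((j + (n+1) : ℕ) : ℝ) = ((j + n : ℕ) : ℝ) + 1 := by push_cast; ring
      rw [dk_succ', h1, add_sub_cancel_right, ih j]
      have h2 : (Nat.factorial (j + (n+1)) : ℝ) = ((j + n : ℕ) + 1) * Nat.factorial (j + n) := by
        have : j + (n+1) = (j + n) + 1 := by omega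
        rw [this, Nat.factorial_succ]
        push_cast; ring
      rw [h2]
      field_simp

/-! ### The combinatorial key identity -/

noncomputable def Lsum (m : ℕ) (t s : ℝ) : ℝ :=
  ∑ n ∈ range (m + 1), (-2 : ℝ) ^ n * (m.choose n) * pk (t + s + 1) n * pk (t + n + 1) (m - n)

noncomputable def Rsum (m : ℕ) (t s : ℝ) : ℝ :=
  ∑ n ∈ range (m + 1), (2 : ℝ) ^ n * (m.choose n) * dk s n * pk (t + n + 1) (m - n)

private lemma shift_factor (t : ℝ) (j m : ℕ) (hj : j ≤ m) :
    (t + j + 1) * pk (t + j + 1 + 1) (m - j) = (t + m + 1) * pk (t + j + 1) (m - j) := by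
  have h1 := pk_succ' (t + j + 1) (m - j)
  have h2 := pk_succ (t + j + 1) (m - j)
  rw [h1] at h2
  rw [h2, Nat.cast_sub hj]
  ring

private lemma long_pk (t : ℝ) (n m : ℕ) (hn : n ≤ m) :
    pk (t + n + 1) (m + 1 - n) = pk (t + n + 1) (m - n) * (t + m + 1) := by
  have h1 : m + 1 - n = (m - n) + 1 := by omega
  rw [h1, pk_succ, Nat.cast_sub hn]
  ring

lemma Lsum_rec (m : ℕ) (t s : ℝ) :
    Lsum (m + 1) t s = -(t + m + 1) * Lsum m t s - 2 * s * Lsum m (t + 1) (s - 1) := by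
  have expand : Lsum (m + 1) t s =
      (∑ j ∈ range (m + 1),
        (-2 : ℝ) ^ (j+1) * (((m+1).choose (j+1) : ℕ) : ℝ) * pk (t + s + 1) (j+1)
          * pk (t + ((j+1 : ℕ) : ℝ) + 1) (m + 1 - (j+1)))
      + (-2 : ℝ) ^ 0 * (((m+1).choose 0 : ℕ) : ℝ) * pk (t + s + 1) 0
          * pk (t + ((0 : ℕ) : ℝ) + 1) (m + 1 - 0) := by
    rw [Lsum]
    exact Finset.sum_range_succ'
      (fun n => (-2 : ℝ) ^ n * (((m+1).choose n : ℕ) : ℝ) * pk (t + s + 1) n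
        * pk (t + n + 1) (m + 1 - n)) (m + 1)
  have term : ∀ j ∈ range (m + 1),
      (-2 : ℝ) ^ (j+1) * (((m+1).choose (j+1) : ℕ) : ℝ) * pk (t + s + 1) (j+1)
          * pk (t + ((j+1 : ℕ) : ℝ) + 1) (m + 1 - (j+1))
      = ((-2 : ℝ) ^ (j+1) * ((m.choose (j+1) : ℕ) : ℝ) * pk (t + s + 1) (j+1)
          * pk (t + ((j+1 : ℕ) : ℝ) + 1) (m + 1 - (j+1)))
        + ((t + m + 1) * (-2) * ((-2 : ℝ) ^ j * ((m.choose j : ℕ) : ℝ) * pk (t + s + 1) j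
            * pk (t + j + 1) (m - j))
          + (-2) * s * ((-2 : ℝ) ^ j * ((m.choose j : ℕ) : ℝ) * pk ((t+1) + (s-1) + 1) j
            * pk ((t+1) + j + 1) (m - j))) := by
    intro j hj
    have hjm : j ≤ m := Nat.lt_succ_iff.mp (mem_range.mp hj)
    have hsub : m + 1 - (j + 1) = m - j := by omega
    have hch : (((m+1).choose (j+1) : ℕ) : ℝ)
        = ((m.choose j : ℕ) : ℝ) + ((m.choose (j+1) : ℕ) : ℝ) := by
      rw [Nat.choose_succ_succ]; push_cast; ring
    have hpkcast : pk (t + ((j+1 : ℕ) : ℝ) + 1) (m - j) = pk (t + j + 1 + 1) (m - j) := by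
      apply pk_congr; push_cast; ring
    have hpks : pk (t + s + 1) (j + 1) = pk (t + s + 1) j * (t + s + 1 + j) := pk_succ _ _
    have hsf := shift_factor t j m hjm
    have hc1 : pk ((t+1) + (s-1) + 1) j = pk (t + s + 1) j := pk_congr _ (by ring)
    have hc2 : pk ((t+1) + j + 1) (m - j) = pk (t + j + 1 + 1) (m - j) := pk_congr _ (by ring)
    rw [hsub, hch, hpkcast, hpks, hc1, hc2]
    linear_combination ((-2:ℝ) * (-2:ℝ)^j * ((m.choose j : ℕ) : ℝ) * pk (t+s+1) j) * hsf
  rw [expand, Finset.sum_congr rfl term, Finset.sum_add_distrib]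
  have hS1 : (∑ j ∈ range (m+1), (-2:ℝ)^(j+1) * ((m.choose (j+1) : ℕ) : ℝ) * pk (t+s+1) (j+1)
        * pk (t + ((j+1:ℕ):ℝ) + 1) (m+1-(j+1)))
      + (-2:ℝ)^0 * (((m+1).choose 0 : ℕ):ℝ) * pk (t+s+1) 0 * pk (t + ((0:ℕ):ℝ) + 1) (m+1-0)
      = (t+m+1) * Lsum m t s := by
    have h0 : (-2:ℝ)^0 * (((m+1).choose 0 : ℕ):ℝ) * pk (t+s+1) 0 * pk (t + ((0:ℕ):ℝ) + 1) (m+1-0)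
        = (-2:ℝ)^0 * ((m.choose 0 : ℕ):ℝ) * pk (t+s+1) 0 * pk (t + ((0:ℕ):ℝ) + 1) (m+1-0) := by
      norm_num
    rw [h0, ← Finset.sum_range_succ'
      (fun n => (-2:ℝ)^n * ((m.choose n : ℕ):ℝ) * pk (t+s+1) n * pk (t + (n:ℝ) + 1) (m+1-n)) (m+1),
      Finset.sum_range_succ]
    have hz : ((m.choose (m+1) : ℕ) : ℝ) = 0 := by simp [Nat.choose_succ_self]
    rw [hz]
    simp only [mul_zero, zero_mul, add_zero]
    rw [Lsum, Finset.mul_sum]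
    refine Finset.sum_congr rfl fun n hn => ?_
    have hn' : n ≤ m := Nat.lt_succ_iff.mp (mem_range.mp hn)
    rw [long_pk t n m hn']
    ring
  have hS2 : (∑ j ∈ range (m+1),
      ((t + m + 1) * (-2) * ((-2 : ℝ) ^ j * ((m.choose j : ℕ) : ℝ) * pk (t + s + 1) j
            * pk (t + j + 1) (m - j))
        + (-2) * s * ((-2 : ℝ) ^ j * ((m.choose j : ℕ) : ℝ) * pk ((t+1) + (s-1) + 1) j
            * pk ((t+1) + j + 1) (m - j))))
      = (t + m + 1) * (-2) * Lsum m t s + (-2) * s * Lsum m (t+1) (s-1) := by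
    rw [Finset.sum_add_distrib, ← Finset.mul_sum, ← Finset.mul_sum, Lsum, Lsum]
  linear_combination hS1 + hS2

lemma Rsum_rec (m : ℕ) (t s : ℝ) :
    Rsum (m + 1) t s = (t + m + 1) * Rsum m t s + 2 * s * Rsum m (t + 1) (s - 1) := by
  have expand : Rsum (m + 1) t s =
      (∑ j ∈ range (m + 1),
        (2 : ℝ) ^ (j+1) * (((m+1).choose (j+1) : ℕ) : ℝ) * dk s (j+1)
          * pk (t + ((j+1 : ℕ) : ℝ) + 1) (m + 1 - (j+1)))
      + (2 : ℝ) ^ 0 * (((m+1).choose 0 : ℕ) : ℝ) * dk s 0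
          * pk (t + ((0 : ℕ) : ℝ) + 1) (m + 1 - 0) := by
    rw [Rsum]
    exact Finset.sum_range_succ'
      (fun n => (2 : ℝ) ^ n * (((m+1).choose n : ℕ) : ℝ) * dk s n
        * pk (t + n + 1) (m + 1 - n)) (m + 1)
  have term : ∀ j ∈ range (m + 1),
      (2 : ℝ) ^ (j+1) * (((m+1).choose (j+1) : ℕ) : ℝ) * dk s (j+1)
          * pk (t + ((j+1 : ℕ) : ℝ) + 1) (m + 1 - (j+1))
      = ((2 : ℝ) ^ (j+1) * ((m.choose (j+1) : ℕ) : ℝ) * dk s (j+1)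
          * pk (t + ((j+1 : ℕ) : ℝ) + 1) (m + 1 - (j+1)))
        + 2 * s * ((2 : ℝ) ^ j * ((m.choose j : ℕ) : ℝ) * dk (s-1) j
            * pk ((t+1) + j + 1) (m - j)) := by
    intro j hj
    have hsub : m + 1 - (j + 1) = m - j := by omega
    have hch : (((m+1).choose (j+1) : ℕ) : ℝ)
        = ((m.choose j : ℕ) : ℝ) + ((m.choose (j+1) : ℕ) : ℝ) := by
      rw [Nat.choose_succ_succ]; push_cast; ring
    have hpkcast : pk (t + ((j+1 : ℕ) : ℝ) + 1) (m - j) = pk ((t+1) + j + 1) (m - j) := by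
      apply pk_congr; push_cast; ring
    rw [hsub, hch, hpkcast, dk_succ']
    ring
  rw [expand, Finset.sum_congr rfl term, Finset.sum_add_distrib]
  have hS1 : (∑ j ∈ range (m+1), (2:ℝ)^(j+1) * ((m.choose (j+1) : ℕ) : ℝ) * dk s (j+1)
        * pk (t + ((j+1:ℕ):ℝ) + 1) (m+1-(j+1)))
      + (2:ℝ)^0 * (((m+1).choose 0 : ℕ):ℝ) * dk s 0 * pk (t + ((0:ℕ):ℝ) + 1) (m+1-0)
      = (t+m+1) * Rsum m t s := by
    have h0 : (2:ℝ)^0 * (((m+1).choose 0 : ℕ):ℝ) * dk s 0 * pk (t + ((0:ℕ):ℝ) + 1) (m+1-0)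
        = (2:ℝ)^0 * ((m.choose 0 : ℕ):ℝ) * dk s 0 * pk (t + ((0:ℕ):ℝ) + 1) (m+1-0) := by
      norm_num
    rw [h0, ← Finset.sum_range_succ'
      (fun n => (2:ℝ)^n * ((m.choose n : ℕ):ℝ) * dk s n * pk (t + (n:ℝ) + 1) (m+1-n)) (m+1),
      Finset.sum_range_succ]
    have hz : ((m.choose (m+1) : ℕ) : ℝ) = 0 := by simp [Nat.choose_succ_self]
    rw [hz]
    simp only [mul_zero, zero_mul, add_zero]
    rw [Rsum, Finset.mul_sum]
    refine Finset.sum_congr rfl fun n hn => ?_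
    have hn' : n ≤ m := Nat.lt_succ_iff.mp (mem_range.mp hn)
    rw [long_pk t n m hn']
    ring
  have hS2 : (∑ j ∈ range (m+1),
      2 * s * ((2 : ℝ) ^ j * ((m.choose j : ℕ) : ℝ) * dk (s-1) j * pk ((t+1) + j + 1) (m - j)))
      = 2 * s * Rsum m (t+1) (s-1) := by
    rw [← Finset.mul_sum, Rsum]
  linear_combination hS1 + hS2

lemma key_id (m : ℕ) (t s : ℝ) : Lsum m t s = (-1 : ℝ) ^ m * Rsum m t s := by
  induction m generalizing t s with
  | zero => simp [Lsum, Rsum, pk_zero, dk]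
  | succ m ih =>
      rw [Lsum_rec, Rsum_rec, ih t s, ih (t+1) (s-1)]
      ring

/-! ### Integrals -/

lemma moment_integrableOn (c : ℝ) (hc : 0 ≤ c) :
    IntegrableOn (fun x : ℝ => Real.exp (-x ^ 2 / 2) * x ^ (2 * c + 1)) (Ioi 0) := by
  have h := integrableOn_rpow_mul_exp_neg_mul_sq (b := 1/2) (by norm_num) (s := 2 * c + 1)
    (by linarith)
  have heq : (fun x : ℝ => Real.exp (-x ^ 2 / 2) * x ^ (2 * c + 1))
      = fun x : ℝ => x ^ (2 * c + 1) * Real.exp (-(1/2) * x ^ 2) := by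
    funext x
    rw [mul_comm]
    congr 1
    ring
  rw [heq]
  exact h

lemma moment_value (c : ℝ) (hc : 0 ≤ c) :
    ∫ x in Ioi (0 : ℝ), Real.exp (-x ^ 2 / 2) * x ^ (2 * c + 1)
      = (2 : ℝ) ^ c * Real.Gamma (c + 1) := by
  have h := integral_rpow_mul_exp_neg_mul_rpow (p := 2) (q := 2 * c + 1) (b := 1/2)
    (by norm_num) (by linarith) (by norm_num)
  have heq : ∀ x ∈ Ioi (0 : ℝ), Real.exp (-x ^ 2 / 2) * x ^ (2 * c + 1)
      = x ^ (2 * c + 1) * Real.exp (-(1/2) * x ^ (2 : ℝ)) := by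
    intro x hx
    rw [mul_comm]
    congr 1
    rw [show (2:ℝ) = ((2:ℕ):ℝ) by norm_num, Real.rpow_natCast]
    ring
  rw [setIntegral_congr_fun measurableSet_Ioi heq, h]
  have h1 : (-(2 * c + 1 + 1) / 2 : ℝ) = -(c + 1) := by ring
  have h2 : ((2 * c + 1 + 1) / 2 : ℝ) = c + 1 := by ring
  rw [h1, h2]
  have h3 : ((1/2 : ℝ)) ^ (-(c+1) : ℝ) = (2 : ℝ) ^ (c + 1 : ℝ) := by
    rw [show (1/2 : ℝ) = 2⁻¹ by norm_num,
      Real.inv_rpow (by norm_num : (0:ℝ) ≤ 2),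
      ← Real.rpow_neg (by norm_num : (0:ℝ) ≤ 2), neg_neg]
  rw [h3, Real.rpow_add (by norm_num : (0:ℝ) < 2) c 1]
  rw [Real.rpow_one]
  ring

lemma exp_tsum (z : ℝ) : ∑' j : ℕ, z ^ j / (Nat.factorial j : ℝ) = Real.exp z := by
  rw [Real.exp_eq_exp_ℝ, NormedSpace.exp_eq_tsum_div]

/-! ### Coefficients and pieces -/

noncomputable def aco (α : ℝ) (m n : ℕ) : ℝ :=
  (-1 : ℝ) ^ n * Real.Gamma ((m : ℝ) + α + 1) /
      (Real.Gamma ((n : ℝ) + α + 1) * (Nat.factorial (m - n)) * (Nat.factorial n))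

noncomputable def bco (α : ℝ) (k : ℕ) : ℝ :=
  (-1 : ℝ) ^ k * (2 : ℝ) ^ (-(α + 2 * (k : ℝ))) /
      (Real.Gamma ((k : ℝ) + 1) * Real.Gamma ((k : ℝ) + α + 1))

lemma laguerre_eq (α : ℝ) (m : ℕ) (x : ℝ) :
    laguerre α m x = ∑ n ∈ range (m + 1), aco α m n * x ^ n := rfl

lemma bessel_eq (α w : ℝ) : besselNormR α w = ∑' k : ℕ, bco α k * w ^ (2 * k) := rfl

noncomputable def hnk (α : ℝ) (n k : ℕ) (x : ℝ) : ℝ :=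
  Real.exp (-x ^ 2 / 2) * (x ^ (2 * n) * x ^ (2 * k) * x ^ (2 * α + 1))

noncomputable def FF (α : ℝ) (m : ℕ) (y : ℝ) (k : ℕ) (x : ℝ) : ℝ :=
  bco α k * y ^ (2 * k) * (laguerreFun α m x * x ^ (2 * k) * x ^ (2 * α + 1))

lemma hnk_eq (α : ℝ) (n k : ℕ) {x : ℝ} (hx : 0 < x) :
    hnk α n k x = Real.exp (-x ^ 2 / 2) * x ^ (2 * (α + n + k) + 1) := by
  rw [hnk]
  congr 1
  rw [show (x : ℝ) ^ (2*n) = x ^ ((2*n : ℕ) : ℝ) from (Real.rpow_natCast x (2*n)).symm,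
    show (x : ℝ) ^ (2*k) = x ^ ((2*k : ℕ) : ℝ) from (Real.rpow_natCast x (2*k)).symm,
    ← Real.rpow_add hx, ← Real.rpow_add hx]
  congr 1
  push_cast
  ring

lemma hnk_integrableOn (α : ℝ) (hα : 0 ≤ α) (n k : ℕ) :
    IntegrableOn (hnk α n k) (Ioi 0) := by
  refine (moment_integrableOn (α + n + k) (by positivity)).congr_fun
    (fun x hx => ?_) measurableSet_Ioi
  exact (hnk_eq α n k hx).symm

lemma hnk_integral (α : ℝ) (hα : 0 ≤ α) (n k : ℕ) :
    ∫ x in Ioi (0:ℝ), hnk α n k x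
      = (2 : ℝ) ^ (α + (n:ℝ) + (k:ℝ)) * Real.Gamma (α + (n:ℝ) + (k:ℝ) + 1) := by
  rw [setIntegral_congr_fun measurableSet_Ioi (fun x hx => hnk_eq α n k (hx : (0:ℝ) < x))]
  exact moment_value (α + n + k) (by positivity)

lemma FF_eq_sum (α : ℝ) (m : ℕ) (y : ℝ) (k : ℕ) (x : ℝ) :
    FF α m y k x = ∑ n ∈ range (m + 1),
      (bco α k * y ^ (2 * k) * aco α m n) * hnk α n k x := by
  simp only [FF, laguerreFun, laguerre_eq, hnk, Finset.mul_sum, Finset.sum_mul]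
  refine Finset.sum_congr rfl fun n _ => ?_
  rw [pow_mul x 2 n]
  ring

lemma hnk_nonneg (α : ℝ) (n k : ℕ) {x : ℝ} (hx : 0 < x) : 0 ≤ hnk α n k x := by
  rw [hnk]
  positivity

lemma FF_integrableOn (α : ℝ) (hα : 0 ≤ α) (m : ℕ) (y : ℝ) (k : ℕ) :
    IntegrableOn (FF α m y k) (Ioi 0) := by
  have h : FF α m y k = fun x => ∑ n ∈ range (m + 1),
      (bco α k * y ^ (2 * k) * aco α m n) * hnk α n k x := funext (FF_eq_sum α m y k)
  rw [h]
  exact integrable_finset_sum _ fun n _ => (hnk_integrableOn α hα n k).const_mul _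

lemma FF_integral (α : ℝ) (hα : 0 ≤ α) (m : ℕ) (y : ℝ) (k : ℕ) :
    ∫ x in Ioi (0:ℝ), FF α m y k x = ∑ n ∈ range (m + 1),
      (bco α k * y ^ (2 * k) * aco α m n)
        * ((2 : ℝ) ^ (α + (n:ℝ) + (k:ℝ)) * Real.Gamma (α + (n:ℝ) + (k:ℝ) + 1)) := by
  simp_rw [FF_eq_sum α m y k]
  rw [integral_finset_sum _ fun n _ => (hnk_integrableOn α hα n k).const_mul _]
  exact Finset.sum_congr rfl fun n _ => by
    rw [integral_const_mul, hnk_integral α hα n k]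

lemma FF_norm_integral_le (α : ℝ) (hα : 0 ≤ α) (m : ℕ) (y : ℝ) (k : ℕ) :
    ∫ x in Ioi (0:ℝ), ‖FF α m y k x‖ ≤ ∑ n ∈ range (m + 1),
      ‖bco α k * y ^ (2 * k) * aco α m n‖
        * ((2 : ℝ) ^ (α + (n:ℝ) + (k:ℝ)) * Real.Gamma (α + (n:ℝ) + (k:ℝ) + 1)) := by
  have hdom : IntegrableOn (fun x => ∑ n ∈ range (m + 1),
      ‖bco α k * y ^ (2 * k) * aco α m n‖ * hnk α n k x) (Ioi 0) :=
    integrable_finset_sum _ fun n _ => (hnk_integrableOn α hα n k).const_mul _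
  have h1 : ∫ x in Ioi (0:ℝ), ‖FF α m y k x‖ ≤ ∫ x in Ioi (0:ℝ), ∑ n ∈ range (m + 1),
      ‖bco α k * y ^ (2 * k) * aco α m n‖ * hnk α n k x := by
    refine integral_mono_ae ((FF_integrableOn α hα m y k).norm) hdom ?_
    filter_upwards [ae_restrict_mem measurableSet_Ioi] with x hx
    rw [FF_eq_sum α m y k]
    refine le_trans (norm_sum_le _ _) (le_of_eq (Finset.sum_congr rfl fun n _ => ?_))
    rw [norm_mul, Real.norm_of_nonneg (hnk_nonneg α n k hx)]
  refine h1.trans (le_of_eq ?_)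
  rw [integral_finset_sum _ fun n _ => (hnk_integrableOn α hα n k).const_mul _]
  exact Finset.sum_congr rfl fun n _ => by
    rw [integral_const_mul, hnk_integral α hα n k]

lemma pk_le_bound (α : ℝ) (hα : 0 ≤ α) (n k : ℕ) :
    pk (α + (k:ℝ) + 1) n ≤ ((α + (n:ℝ) + 1) * 2 ^ (k+1)) ^ n := by
  rw [pk, show ((α + (n:ℝ) + 1) * 2 ^ (k+1)) ^ n
      = ∏ _i ∈ Finset.range n, ((α + (n:ℝ) + 1) * 2 ^ (k+1)) by
    rw [Finset.prod_const, Finset.card_range]]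
  refine Finset.prod_le_prod (fun i _ => by positivity) (fun i hi => ?_)
  have hi' : (i:ℝ) + 1 ≤ (n:ℝ) := by exact_mod_cast Finset.mem_range.mp hi
  have hk2 : (k:ℝ) + 1 ≤ 2 ^ (k+1) := by exact_mod_cast (Nat.lt_two_pow_self (n := k+1)).le
  have h1 : (α + (n:ℝ) + 1) * ((k:ℝ) + 1) ≤ (α + (n:ℝ) + 1) * 2 ^ (k+1) :=
    mul_le_mul_of_nonneg_left hk2 (by positivity)
  nlinarith [mul_nonneg (show (0:ℝ) ≤ α + (n:ℝ) by positivity) (Nat.cast_nonneg k)]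

lemma FF_bound (α : ℝ) (hα : 0 ≤ α) (n k : ℕ) (y A : ℝ) :
    ‖bco α k * y ^ (2 * k) * A‖ * ((2 : ℝ) ^ (α + (n:ℝ) + (k:ℝ)) * Real.Gamma (α + (n:ℝ) + (k:ℝ) + 1))
      ≤ (‖A‖ * ((α + (n:ℝ) + 1) ^ n * 2 ^ n * 2 ^ n)) * (((2:ℝ) ^ n * y ^ 2) ^ k / (Nat.factorial k : ℝ)) := by
  have hG1 : (0:ℝ) < Real.Gamma ((k:ℝ) + α + 1) := Real.Gamma_pos_of_pos (by positivity)
  have hGk : Real.Gamma ((k:ℝ) + 1) = (Nat.factorial k : ℝ) := Real.Gamma_nat_eq_factorial k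
  have hb : ‖bco α k‖ = (2:ℝ) ^ (-(α + 2*(k:ℝ))) / ((Nat.factorial k : ℝ) * Real.Gamma ((k:ℝ) + α + 1)) := by
    rw [bco, Real.norm_eq_abs, abs_div, abs_mul, abs_pow, abs_neg, abs_one, one_pow, one_mul,
      abs_of_pos (Real.rpow_pos_of_pos (by norm_num) _), hGk,
      abs_of_pos (by positivity)]
  have hynorm : ‖y ^ (2*k)‖ = (y^2) ^ k := by
    rw [pow_mul, Real.norm_of_nonneg (by positivity)]
  have key : (2:ℝ) ^ (-(α + 2*(k:ℝ))) / ((Nat.factorial k : ℝ) * Real.Gamma ((k:ℝ) + α + 1))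
      * ((2 : ℝ) ^ (α + (n:ℝ) + (k:ℝ)) * Real.Gamma (α + (n:ℝ) + (k:ℝ) + 1))
      = (2:ℝ) ^ ((n:ℝ) - (k:ℝ)) * pk (α + (k:ℝ) + 1) n / (Nat.factorial k : ℝ) := by
    have hGpk : Real.Gamma (α + (n:ℝ) + (k:ℝ) + 1)
        = Real.Gamma (α + (k:ℝ) + 1) * pk (α + (k:ℝ) + 1) n := by
      rw [show α + (n:ℝ) + (k:ℝ) + 1 = (α + (k:ℝ) + 1) + (n:ℝ) by ring]
      exact Gamma_pk (by positivity) n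
    have hGc : Real.Gamma ((k:ℝ) + α + 1) = Real.Gamma (α + (k:ℝ) + 1) := by
      rw [show (k:ℝ) + α + 1 = α + (k:ℝ) + 1 by ring]
    have h2 : (2:ℝ) ^ ((n:ℝ) - (k:ℝ)) = (2:ℝ) ^ (-(α + 2*(k:ℝ))) * (2:ℝ) ^ (α + (n:ℝ) + (k:ℝ)) := by
      rw [← Real.rpow_add (by norm_num : (0:ℝ) < 2)]
      congr 1
      ring
    rw [hGpk, hGc, h2]
    have hG2 : (0:ℝ) < Real.Gamma (α + (k:ℝ) + 1) := Real.Gamma_pos_of_pos (by positivity)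
    have hf : (Nat.factorial k : ℝ) ≠ 0 := by exact_mod_cast Nat.factorial_ne_zero k
    field_simp
  have step1 : ‖bco α k * y ^ (2 * k) * A‖
      * ((2 : ℝ) ^ (α + (n:ℝ) + (k:ℝ)) * Real.Gamma (α + (n:ℝ) + (k:ℝ) + 1))
      = ‖A‖ * (y^2)^k * ((2:ℝ) ^ ((n:ℝ) - (k:ℝ)) * pk (α + (k:ℝ) + 1) n / (Nat.factorial k : ℝ)) := by
    rw [norm_mul, norm_mul, hb, hynorm, ← key]
    ring
  rw [step1]
  have hpow : (2:ℝ) ^ ((n:ℝ) - (k:ℝ)) ≤ 2 ^ n := by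
    rw [← Real.rpow_natCast 2 n]
    exact Real.rpow_le_rpow_of_exponent_le (by norm_num) (by simp [sub_le_self_iff])
  have hpk := pk_le_bound α hα n k
  have hprod : (2:ℝ) ^ ((n:ℝ) - (k:ℝ)) * pk (α + (k:ℝ) + 1) n
      ≤ 2 ^ n * ((α + (n:ℝ) + 1) * 2 ^ (k+1)) ^ n := by
    refine mul_le_mul hpow hpk (le_of_lt (pk_pos (by positivity) n)) (by positivity)
  have hexp : ((α + (n:ℝ) + 1) * 2 ^ (k+1)) ^ n
      = (α + (n:ℝ) + 1) ^ n * (((2:ℝ) ^ n) ^ k * 2 ^ n) := by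
    rw [mul_pow, ← pow_mul, mul_comm (k+1) n, pow_mul, pow_succ]
  calc ‖A‖ * (y^2)^k * ((2:ℝ) ^ ((n:ℝ) - (k:ℝ)) * pk (α + (k:ℝ) + 1) n / (Nat.factorial k : ℝ))
      ≤ ‖A‖ * (y^2)^k * (2 ^ n * ((α + (n:ℝ) + 1) * 2 ^ (k+1)) ^ n / (Nat.factorial k : ℝ)) := by
        gcongr
    _ = (‖A‖ * ((α + (n:ℝ) + 1) ^ n * 2 ^ n * 2 ^ n)) * (((2:ℝ) ^ n * y ^ 2) ^ k / (Nat.factorial k : ℝ)) := by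
        rw [hexp]
        ring

lemma FF_norm_summable (α : ℝ) (hα : 0 ≤ α) (m : ℕ) (y : ℝ) :
    Summable (fun k => ∫ x in Ioi (0:ℝ), ‖FF α m y k x‖) := by
  refine Summable.of_nonneg_of_le
    (fun k => integral_nonneg fun x => norm_nonneg _)
    (fun k => le_trans (FF_norm_integral_le α hα m y k)
      (Finset.sum_le_sum fun n _ => FF_bound α hα n k y (aco α m n)))
    (summable_sum fun n _ => ?_)
  exact (Real.summable_pow_div_factorial ((2:ℝ) ^ n * y ^ 2)).mul_left _

/-! ### The per-`k` algebraic identity -/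

lemma termwise_L (α : ℝ) (hα : 0 ≤ α) (m : ℕ) (y : ℝ) (k n : ℕ) (hn : n ≤ m) :
    (bco α k * y ^ (2 * k) * aco α m n)
        * ((2 : ℝ) ^ (α + (n:ℝ) + (k:ℝ)) * Real.Gamma (α + (n:ℝ) + (k:ℝ) + 1))
    = ((-1:ℝ)^k * (y^2)^k / (2^k * (Nat.factorial m : ℝ) * (Nat.factorial k : ℝ)))
      * ((-2:ℝ)^n * (m.choose n : ℝ) * pk (α + (k:ℝ) + 1) n * pk (α + (n:ℝ) + 1) (m - n)) := by
  have hG1 : (0:ℝ) < Real.Gamma (α + (k:ℝ) + 1) := Real.Gamma_pos_of_pos (by positivity)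
  have hG2 : (0:ℝ) < Real.Gamma (α + (n:ℝ) + 1) := Real.Gamma_pos_of_pos (by positivity)
  have hGk : Real.Gamma ((k:ℝ) + 1) = (Nat.factorial k : ℝ) := Real.Gamma_nat_eq_factorial k
  have hGc1 : Real.Gamma ((k:ℝ) + α + 1) = Real.Gamma (α + (k:ℝ) + 1) := by
    rw [show (k:ℝ) + α + 1 = α + (k:ℝ) + 1 by ring]
  have hGc2 : Real.Gamma ((n:ℝ) + α + 1) = Real.Gamma (α + (n:ℝ) + 1) := by
    rw [show (n:ℝ) + α + 1 = α + (n:ℝ) + 1 by ring]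
  have hGpk1 : Real.Gamma (α + (n:ℝ) + (k:ℝ) + 1)
      = Real.Gamma (α + (k:ℝ) + 1) * pk (α + (k:ℝ) + 1) n := by
    rw [show α + (n:ℝ) + (k:ℝ) + 1 = (α + (k:ℝ) + 1) + (n:ℝ) by ring]
    exact Gamma_pk (by positivity) n
  have hGpk2 : Real.Gamma ((m:ℝ) + α + 1)
      = Real.Gamma (α + (n:ℝ) + 1) * pk (α + (n:ℝ) + 1) (m - n) := by
    rw [show (m:ℝ) + α + 1 = (α + (n:ℝ) + 1) + ((m - n : ℕ) : ℝ) by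
      rw [Nat.cast_sub hn]; ring]
    exact Gamma_pk (by positivity) (m - n)
  have h2 : (2:ℝ) ^ (-(α + 2*(k:ℝ))) = 2^n / 2^k / (2:ℝ) ^ (α + (n:ℝ) + (k:ℝ)) := by
    rw [eq_div_iff (ne_of_gt (Real.rpow_pos_of_pos (by norm_num) _)),
      ← Real.rpow_add (by norm_num : (0:ℝ) < 2)]
    rw [show -(α + 2*(k:ℝ)) + (α + (n:ℝ) + (k:ℝ)) = (n:ℝ) - (k:ℝ) by ring,
      Real.rpow_sub (by norm_num : (0:ℝ) < 2), Real.rpow_natCast, Real.rpow_natCast]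
  have hm : (Nat.factorial m : ℝ)
      = (m.choose n : ℝ) * (Nat.factorial n : ℝ) * (Nat.factorial (m - n) : ℝ) := by
    exact_mod_cast (Nat.choose_mul_factorial_mul_factorial hn).symm
  have hfk : (Nat.factorial k : ℝ) ≠ 0 := by exact_mod_cast Nat.factorial_ne_zero k
  have hfn : (Nat.factorial n : ℝ) ≠ 0 := by exact_mod_cast Nat.factorial_ne_zero n
  have hfmn : (Nat.factorial (m - n) : ℝ) ≠ 0 := by exact_mod_cast Nat.factorial_ne_zero (m - n)
  have hch : (0:ℝ) < (m.choose n : ℝ) := by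
    exact_mod_cast Nat.choose_pos hn
  have hrp : (0:ℝ) < (2:ℝ) ^ (α + (n:ℝ) + (k:ℝ)) := Real.rpow_pos_of_pos (by norm_num) _
  rw [bco, aco, hGk, hGc1, hGc2, hGpk1, hGpk2, h2, pow_mul y, hm,
    show (-2:ℝ)^n = (-1:ℝ)^n * 2^n by rw [neg_pow]]
  field_simp

noncomputable def Hnk (α : ℝ) (m : ℕ) (y : ℝ) (n k : ℕ) : ℝ :=
  ((-1:ℝ)^m * (-1:ℝ)^k * (y^2)^k / (2^k * (Nat.factorial m : ℝ) * (Nat.factorial k : ℝ)))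
    * ((2:ℝ)^n * (m.choose n : ℝ) * dk (k:ℝ) n * pk (α + (n:ℝ) + 1) (m - n))

lemma integral_FF_eq (α : ℝ) (hα : 0 ≤ α) (m : ℕ) (y : ℝ) (k : ℕ) :
    ∫ x in Ioi (0:ℝ), FF α m y k x = ∑ n ∈ range (m + 1), Hnk α m y n k := by
  rw [FF_integral α hα m y k]
  have hL : ∑ n ∈ range (m + 1), (bco α k * y ^ (2 * k) * aco α m n)
        * ((2 : ℝ) ^ (α + (n:ℝ) + (k:ℝ)) * Real.Gamma (α + (n:ℝ) + (k:ℝ) + 1))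
      = ((-1:ℝ)^k * (y^2)^k / (2^k * (Nat.factorial m : ℝ) * (Nat.factorial k : ℝ)))
        * Lsum m α (k:ℝ) := by
    rw [Lsum, Finset.mul_sum]
    refine Finset.sum_congr rfl fun n hn => ?_
    have hn' : n ≤ m := Nat.lt_succ_iff.mp (Finset.mem_range.mp hn)
    exact termwise_L α hα m y k n hn'
  rw [hL, key_id m α (k:ℝ)]
  rw [Rsum, Finset.mul_sum, Finset.mul_sum]
  refine Finset.sum_congr rfl fun n hn => ?_
  rw [Hnk]
  have : pk (α + (n:ℝ) + 1) (m - n) = pk (α + (n:ℝ) + 1) (m - n) := rfl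
  ring

/-! ### Summing over `k` -/

noncomputable def uu (y : ℝ) (n k : ℕ) : ℝ :=
  (-1:ℝ)^k * (y^2)^k * dk (k:ℝ) n / (2^k * (Nat.factorial k : ℝ))

lemma Hnk_eq_uu (α : ℝ) (m : ℕ) (y : ℝ) (n k : ℕ) :
    Hnk α m y n k = ((-1:ℝ)^m * (2:ℝ)^n * (m.choose n : ℝ) * pk (α + (n:ℝ) + 1) (m - n)
      / (Nat.factorial m : ℝ)) * uu y n k := by
  rw [Hnk, uu]
  ring

lemma uu_comp (y : ℝ) (n j : ℕ) :
    uu y n (j + n) = ((-1:ℝ)^n * (y^2)^n / 2^n) * ((-y^2/2)^j / (Nat.factorial j : ℝ)) := by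
  rw [uu]
  have hd : dk (((j + n : ℕ)) : ℝ) n = (Nat.factorial (j + n) : ℝ) / (Nat.factorial j : ℝ) :=
    dk_cast_shift n j
  rw [show ((j + n : ℕ) : ℝ) = (((j + n : ℕ) : ℕ) : ℝ) from rfl, hd]
  have hfj : (Nat.factorial j : ℝ) ≠ 0 := by exact_mod_cast Nat.factorial_ne_zero j
  have hfjn : (Nat.factorial (j + n) : ℝ) ≠ 0 := by exact_mod_cast Nat.factorial_ne_zero (j + n)
  rw [pow_add, pow_add, pow_add]
  rw [show ((-y^2/2 : ℝ))^j = (-1:ℝ)^j * (y^2)^j / 2^j by rw [div_pow, neg_pow]]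
  field_simp

lemma uu_support (y : ℝ) (n : ℕ) :
    Function.support (uu y n) ⊆ Set.range (fun j : ℕ => j + n) := by
  intro k hk
  by_cases h : n ≤ k
  · exact ⟨k - n, by simpa using Nat.sub_add_cancel h⟩
  · exfalso
    apply hk
    rw [uu, dk_cast_eq_zero (by omega : k < n)]
    simp

lemma uu_summable (y : ℝ) (n : ℕ) : Summable (uu y n) := by
  rw [← Function.Injective.summable_iff (add_left_injective n)
    (fun x hx => Function.notMem_support.mp (fun hs => hx (uu_support y n hs)))]
  have : (uu y n ∘ fun j : ℕ => j + n)
      = fun j => ((-1:ℝ)^n * (y^2)^n / 2^n) * ((-y^2/2)^j / (Nat.factorial j : ℝ)) := by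
    funext j
    exact uu_comp y n j
  rw [this]
  exact (Real.summable_pow_div_factorial _).mul_left _

lemma uu_tsum (y : ℝ) (n : ℕ) :
    ∑' k, uu y n k = ((-1:ℝ)^n * (y^2)^n / 2^n) * Real.exp (-y^2/2) := by
  rw [← Function.Injective.tsum_eq (add_left_injective n) (uu_support y n)]
  have : ∀ j : ℕ, uu y n (j + n)
      = ((-1:ℝ)^n * (y^2)^n / 2^n) * ((-y^2/2)^j / (Nat.factorial j : ℝ)) := uu_comp y n
  rw [tsum_congr this, tsum_mul_left, exp_tsum]

lemma Hnk_summable (α : ℝ) (m : ℕ) (y : ℝ) (n : ℕ) :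
    Summable (fun k => Hnk α m y n k) := by
  have : (fun k => Hnk α m y n k) = fun k =>
      ((-1:ℝ)^m * (2:ℝ)^n * (m.choose n : ℝ) * pk (α + (n:ℝ) + 1) (m - n)
        / (Nat.factorial m : ℝ)) * uu y n k := funext (Hnk_eq_uu α m y n)
  rw [this]
  exact (uu_summable y n).mul_left _

lemma Hnk_tsum (α : ℝ) (hα : 0 ≤ α) (m : ℕ) (y : ℝ) (n : ℕ) (hn : n ≤ m) :
    ∑' k, Hnk α m y n k
      = (-1:ℝ)^m * (aco α m n * (y^2)^n) * Real.exp (-y^2/2) := by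
  have h1 : ∀ k, Hnk α m y n k = ((-1:ℝ)^m * (2:ℝ)^n * (m.choose n : ℝ)
      * pk (α + (n:ℝ) + 1) (m - n) / (Nat.factorial m : ℝ)) * uu y n k := Hnk_eq_uu α m y n
  rw [tsum_congr h1, tsum_mul_left, uu_tsum]
  have hG2 : (0:ℝ) < Real.Gamma (α + (n:ℝ) + 1) := Real.Gamma_pos_of_pos (by positivity)
  have hGc2 : Real.Gamma ((n:ℝ) + α + 1) = Real.Gamma (α + (n:ℝ) + 1) := by
    rw [show (n:ℝ) + α + 1 = α + (n:ℝ) + 1 by ring]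
  have hGpk2 : Real.Gamma ((m:ℝ) + α + 1)
      = Real.Gamma (α + (n:ℝ) + 1) * pk (α + (n:ℝ) + 1) (m - n) := by
    rw [show (m:ℝ) + α + 1 = (α + (n:ℝ) + 1) + ((m - n : ℕ) : ℝ) by
      rw [Nat.cast_sub hn]; ring]
    exact Gamma_pk (by positivity) (m - n)
  have hm : (Nat.factorial m : ℝ)
      = (m.choose n : ℝ) * (Nat.factorial n : ℝ) * (Nat.factorial (m - n) : ℝ) := by
    exact_mod_cast (Nat.choose_mul_factorial_mul_factorial hn).symm
  have hfn : (Nat.factorial n : ℝ) ≠ 0 := by exact_mod_cast Nat.factorial_ne_zero n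
  have hfmn : (Nat.factorial (m - n) : ℝ) ≠ 0 := by exact_mod_cast Nat.factorial_ne_zero (m - n)
  have hch : (0:ℝ) < (m.choose n : ℝ) := by exact_mod_cast Nat.choose_pos hn
  rw [aco, hGc2, hGpk2, hm]
  field_simp

end HankelAux

open HankelAux in
/-- `φ_m^{(α)}` is an eigenfunction of the Hankel transform of order `α`
with eigenvalue `(-1)^m`. -/
theorem laguerreFun_hankel_eigenfunction (α : ℝ) (hα : 0 ≤ α) (m : ℕ) :
    ∀ y : ℝ, 0 ≤ y →
      ∫ x in Set.Ioi (0 : ℝ),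
          laguerreFun α m x * besselNormR α (x * y) * x ^ (2 * α + 1) =
        (-1 : ℝ) ^ m * laguerreFun α m y := by
  intro y hy
  have step0 : ∀ x : ℝ, laguerreFun α m x * besselNormR α (x * y) * x ^ (2 * α + 1)
      = ∑' k, FF α m y k x := by
    intro x
    rw [bessel_eq]
    have h1 : laguerreFun α m x * (∑' k : ℕ, bco α k * (x * y) ^ (2 * k)) * x ^ (2 * α + 1)
        = (∑' k : ℕ, bco α k * (x * y) ^ (2 * k))
            * (laguerreFun α m x * x ^ (2 * α + 1)) := by ring
    rw [h1, ← tsum_mul_right]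
    refine tsum_congr fun k => ?_
    rw [FF, mul_pow]
    ring
  have step1 : ∫ x in Set.Ioi (0:ℝ),
      laguerreFun α m x * besselNormR α (x * y) * x ^ (2 * α + 1)
      = ∫ x in Set.Ioi (0:ℝ), ∑' k, FF α m y k x := by
    exact integral_congr_ae (Filter.Eventually.of_forall fun x => step0 x)
  rw [step1, ← MeasureTheory.integral_tsum_of_summable_integral_norm
    (fun k => FF_integrableOn α hα m y k) (FF_norm_summable α hα m y)]
  rw [tsum_congr (fun k => integral_FF_eq α hα m y k)]
  rw [Summable.tsum_finsetSum (fun n _ => Hnk_summable α m y n)]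
  have step2 : ∀ n ∈ Finset.range (m + 1), ∑' k, Hnk α m y n k
      = (-1:ℝ)^m * (aco α m n * (y^2)^n) * Real.exp (-y^2/2) := fun n hn =>
    Hnk_tsum α hα m y n (Nat.lt_succ_iff.mp (Finset.mem_range.mp hn))
  rw [Finset.sum_congr rfl step2, laguerreFun, laguerre_eq, Finset.mul_sum, Finset.mul_sum]
  refine Finset.sum_congr rfl fun n _ => ?_
  ring
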